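/- Let G be an r-SPTG in which all non-final locations are urgent. For every location ℓ and every ν ∈ [0,r], Val_G(ℓ,ν) belongs to Poss_ν ∪ {−∞,+∞}, where Poss_ν = [−(|L|−1)·w_T − w_F, (|L|−1)·w_T + w_F] ∩ Z* and Z* = ℤ + {φ_{ℓ′}(ν) : ℓ′ ∈ L_Fin}; moreover the cardinality of Poss_ν is at most |L_Fin|·(2(|L|−1)·w_T + 2·w_F + 1). -/

import Mathlib

/-!
Formalization of (simple) priced timed games (SPTGs) following
"One-Clock Priced Timed Games with Negative Weights"
(Brihaye, Geeraerts, Haddad, Lefaucheux, Monmege).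
-/

noncomputable section
open scoped Classical

/-- `f` decomposes, on `[a,b]`, into `n` affine pieces with rational slopes and
rational interior cutpoints.  (This entails in particular that `f` is finite and
continuous on `[a,b]`.) -/
def AffinePiecesOn (f : ℝ → EReal) (a b : ℝ) (n : ℕ) : Prop :=
  ∃ c : ℕ → ℝ, c 0 = a ∧ c n = b ∧ (∀ i < n, c i < c (i + 1)) ∧
    (∀ i, 0 < i → i < n → ∃ q : ℚ, c i = (q : ℝ)) ∧
    (∀ i < n, ∃ (m : ℚ) (q : ℝ), ∀ x : ℝ, c i ≤ x → x ≤ c (i + 1) →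
      f x = (((m : ℝ) * x + q : ℝ) : EReal))

/-- A cost function over `[a,b]`: either constantly `+∞`, or constantly `-∞`, or
continuous and piecewise affine with rational slopes and finitely many rational
cutpoints. -/
def CostFunctionOn (f : ℝ → EReal) (a b : ℝ) : Prop :=
  (∀ x : ℝ, a ≤ x → x ≤ b → f x = ⊤) ∨ (∀ x : ℝ, a ≤ x → x ≤ b → f x = ⊥) ∨
    ∃ n : ℕ, AffinePiecesOn f a b n

/-- `x` and `y` lie in the same interval (open interval or singleton) of the
partition of the line induced by the finite set of points `P`. -/
def sameInt (P : Finset ℚ) (x y : ℝ) : Prop :=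
  ∀ p ∈ P, (((p : ℝ) < x) ↔ ((p : ℝ) < y)) ∧ ((x < (p : ℝ)) ↔ (y < (p : ℝ)))

/-- An `r`-SPTG (simple priced timed game). Locations are partitioned into those of
player Min, player Max and the final ones; some non-final locations are urgent;
transitions carry integer weights, non-final locations carry integer rates, final
locations carry affine final cost functions.  The clock stays in `[0,r]`. -/
structure SPTG where
  Loc : Type
  [fintypeLoc : Fintype Loc]
  [decEqLoc : DecidableEq Loc]
  isMin : Loc → Prop
  isMax : Loc → Prop
  isFin : Loc → Prop
  partition : ∀ ℓ, (isMin ℓ ∧ ¬isMax ℓ ∧ ¬isFin ℓ) ∨ (¬isMin ℓ ∧ isMax ℓ ∧ ¬isFin ℓ) ∨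
    (¬isMin ℓ ∧ ¬isMax ℓ ∧ isFin ℓ)
  isUrg : Loc → Prop
  urg_not_fin : ∀ ℓ, isUrg ℓ → ¬isFin ℓ
  trans : Loc → Loc → Prop
  trans_not_fin : ∀ ℓ ℓ', trans ℓ ℓ' → ¬isFin ℓ
  r : ℝ
  r_nonneg : 0 ≤ r
  r_le_one : r ≤ 1
  finSlope : Loc → ℝ
  finIntercept : Loc → ℝ
  locWt : Loc → ℤ
  transWt : Loc → Loc → ℤ

attribute [instance] SPTG.fintypeLoc SPTG.decEqLoc

namespace SPTG

/-- The final cost functions have rational coefficients (this is part of the paper's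
definition of an SPTG). -/
def ratFinal (G : SPTG) : Prop :=
  ∀ ℓ : G.Loc, (∃ a : ℚ, G.finSlope ℓ = (a : ℝ)) ∧ ∃ b : ℚ, G.finIntercept ℓ = (b : ℝ)

/-- The final cost function `φ_ℓ`. -/
def finalCost (G : SPTG) (ℓ : G.Loc) (ν : ℝ) : ℝ := G.finSlope ℓ * ν + G.finIntercept ℓ

/-- A configuration: a location together with a clock value. -/
abbrev Conf (G : SPTG) := G.Loc × ℝ

def validConf (G : SPTG) (s : G.Conf) : Prop := 0 ≤ s.2 ∧ s.2 ≤ G.r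

/-- A move: a delay `t` together with a transition (determined by its target). -/
structure Move (G : SPTG) where
  t : ℝ
  tgt : G.Loc

/-- The move `m` is available from configuration `s`. -/
def canMove (G : SPTG) (s : G.Conf) (m : G.Move) : Prop :=
  0 ≤ m.t ∧ s.2 + m.t ≤ G.r ∧ G.trans s.1 m.tgt ∧ (G.isUrg s.1 → m.t = 0)

/-- Cost `π(δ) + t·π(ℓ)` of a move. -/
def moveCost (G : SPTG) (s : G.Conf) (m : G.Move) : ℝ :=
  (G.transWt s.1 m.tgt : ℝ) + m.t * (G.locWt s.1 : ℝ)

def applyMove (G : SPTG) (s : G.Conf) (m : G.Move) : G.Conf := (m.tgt, s.2 + m.t)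

def deadlock (G : SPTG) (s : G.Conf) : Prop := ¬∃ m : G.Move, G.canMove s m

/-- A finite play is represented by its initial configuration together with the
list of successive moves; `ValidFrom s l` states that all these moves are legal. -/
def ValidFrom (G : SPTG) : G.Conf → List G.Move → Prop
  | _, [] => True
  | s, m :: l => G.canMove s m ∧ ValidFrom G (G.applyMove s m) l

/-- Last configuration of a finite play. -/
def endConf (G : SPTG) (s : G.Conf) (l : List G.Move) : G.Conf := l.foldl G.applyMove s

/-- Sum of the weights of the discrete transitions taken along a finite play. -/
def transWtSum (G : SPTG) : G.Conf → List G.Move → ℤ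
  | _, [] => 0
  | s, m :: l => G.transWt s.1 m.tgt + transWtSum G (G.applyMove s m) l

/-- Price of a finite play: the accumulated costs of its moves, plus the final cost
function evaluated at the last configuration if its location is final. -/
def finPrice (G : SPTG) : G.Conf → List G.Move → ℝ
  | s, [] => if G.isFin s.1 then G.finalCost s.1 s.2 else 0
  | s, m :: l => G.moveCost s m + finPrice G (G.applyMove s m) l

/-- A strategy of Min: it prescribes a legal move to every finite play ending in a
non-deadlock configuration owned by Min. -/
structure MinStrategy (G : SPTG) where
  move : G.Conf → List G.Move → Option G.Move
  legal : ∀ s l, G.validConf s → G.ValidFrom s l → G.isMin (G.endConf s l).1 →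
    ¬G.deadlock (G.endConf s l) → ∃ m, move s l = some m ∧ G.canMove (G.endConf s l) m

/-- A strategy of Max. -/
structure MaxStrategy (G : SPTG) where
  move : G.Conf → List G.Move → Option G.Move
  legal : ∀ s l, G.validConf s → G.ValidFrom s l → G.isMax (G.endConf s l).1 →
    ¬G.deadlock (G.endConf s l) → ∃ m, move s l = some m ∧ G.canMove (G.endConf s l) m

/-- One step of the play induced by a pair of strategies. -/
def step (G : SPTG) (σmin : MinStrategy G) (σmax : MaxStrategy G) (s : G.Conf)
    (l : List G.Move) : List G.Move :=
  if G.deadlock (G.endConf s l) then l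
  else if G.isMin (G.endConf s l).1 then
    match σmin.move s l with
    | some m => l ++ [m]
    | none => l
  else
    match σmax.move s l with
    | some m => l ++ [m]
    | none => l

/-- The successive finite prefixes of the unique play determined by an initial
configuration and a pair of strategies. -/
def hist (G : SPTG) (σmin : MinStrategy G) (σmax : MaxStrategy G) (s : G.Conf) :
    ℕ → List G.Move
  | 0 => []
  | n + 1 => G.step σmin σmax s (hist G σmin σmax s n)

/-- Price of the completed play determined by an initial configuration and a pair of
strategies: the price of the play if it reaches a final location, `+∞` otherwise. -/
def playCost (G : SPTG) (s : G.Conf) (σmin : MinStrategy G) (σmax : MaxStrategy G) :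
    EReal :=
  if h : ∃ n, G.isFin (G.endConf s (G.hist σmin σmax s n)).1 then
    ((G.finPrice s (G.hist σmin σmax s (Nat.find h)) : ℝ) : EReal)
  else ⊤

/-- Upper value. -/
def upperVal (G : SPTG) (s : G.Conf) : EReal :=
  ⨅ σmin : MinStrategy G, ⨆ σmax : MaxStrategy G, G.playCost s σmin σmax

/-- Lower value. -/
def lowerVal (G : SPTG) (s : G.Conf) : EReal :=
  ⨆ σmax : MaxStrategy G, ⨅ σmin : MinStrategy G, G.playCost s σmin σmax

/-- The value of the game (SPTGs are determined). -/
def val (G : SPTG) (ℓ : G.Loc) (ν : ℝ) : EReal := G.upperVal (ℓ, ν)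

/-- The finite play `(s, l)` is consistent with the Min strategy `σ`. -/
def consistentMin (G : SPTG) (σ : MinStrategy G) (s : G.Conf) (l : List G.Move) : Prop :=
  ∀ (l₁ : List G.Move) (m : G.Move) (l₂ : List G.Move), l = l₁ ++ m :: l₂ →
    G.isMin (G.endConf s l₁).1 → σ.move s l₁ = some m

/-- The finite play `(s, l)` is consistent with the Max strategy `σ`. -/
def consistentMax (G : SPTG) (σ : MaxStrategy G) (s : G.Conf) (l : List G.Move) : Prop :=
  ∀ (l₁ : List G.Move) (m : G.Move) (l₂ : List G.Move), l = l₁ ++ m :: l₂ →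
    G.isMax (G.endConf s l₁).1 → σ.move s l₁ = some m

/-- There is an infinite play from `s` consistent with the Min strategy `σ`. -/
def infConsMin (G : SPTG) (σ : MinStrategy G) (s : G.Conf) : Prop :=
  ∃ ρ : ℕ → G.Move, ∀ n : ℕ,
    G.ValidFrom s (List.ofFn fun i : Fin n => ρ i) ∧
    G.consistentMin σ s (List.ofFn fun i : Fin n => ρ i)

/-- `Cost(s, σ_Min)`: the supremum of the prices of the completed plays from `s`
consistent with `σ_Min` (finite completed plays end in a deadlock; they have price
`+∞` unless they end in a final location; infinite plays have price `+∞`). -/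
def minCost (G : SPTG) (σ : MinStrategy G) (s : G.Conf) : EReal :=
  (⨆ l : { l : List G.Move //
      G.ValidFrom s l ∧ G.consistentMin σ s l ∧ G.deadlock (G.endConf s l) },
    if G.isFin (G.endConf s l.1).1 then ((G.finPrice s l.1 : ℝ) : EReal) else ⊤) ⊔
  (if G.infConsMin σ s then (⊤ : EReal) else ⊥)

/-- `Cost(s, σ_Max)`: the infimum of the prices of the completed plays from `s`
consistent with `σ_Max`. -/
def maxCost (G : SPTG) (σ : MaxStrategy G) (s : G.Conf) : EReal :=
  ⨅ l : { l : List G.Move //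
      G.ValidFrom s l ∧ G.consistentMax σ s l ∧ G.deadlock (G.endConf s l) },
    if G.isFin (G.endConf s l.1).1 then ((G.finPrice s l.1 : ℝ) : EReal) else ⊤

/-- A finite positional (FP-)strategy: a memoryless strategy given by a function `f`
of the current configuration, together with, for each location, finitely many
rational endpoints `0 = ν_0 < ν_1 < ⋯ < ν_k = r` (all belonging to `pts`) such that
on each open interval and at each endpoint the strategy plays the same move, which is
either a fixed transition taken immediately or waiting until the next endpoint and
then taking a fixed transition. -/
structure FPStrategy (G : SPTG) where
  f : G.Conf → Option G.Move
  pts : Finset ℚ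
  zero_mem : (0 : ℚ) ∈ pts
  r_mem : ∃ q ∈ pts, (q : ℝ) = G.r
  pts_range : ∀ q ∈ pts, (0 : ℝ) ≤ (q : ℝ) ∧ (q : ℝ) ≤ G.r
  fp : ∀ ℓ : G.Loc, ∃ (k : ℕ) (ν : ℕ → ℚ) (δ : ℕ → G.Loc),
    (∀ i ≤ k, ν i ∈ pts) ∧ ν 0 = 0 ∧ ((ν k : ℝ) = G.r) ∧ (∀ i < k, ν i < ν (i + 1)) ∧
    (∀ i, 1 ≤ i → i ≤ k →
      (∀ x : ℝ, (ν (i - 1) : ℝ) < x → x < (ν i : ℝ) →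
        f (ℓ, x) = some ⟨0, δ (2 * i - 1)⟩) ∨
      (∀ x : ℝ, (ν (i - 1) : ℝ) < x → x < (ν i : ℝ) →
        f (ℓ, x) = some ⟨(ν i : ℝ) - x, δ (2 * i - 1)⟩)) ∧
    (∀ i < k, f (ℓ, (ν i : ℝ)) = some ⟨0, δ (2 * i)⟩ ∨
      f (ℓ, (ν i : ℝ)) = some ⟨(ν (i + 1) : ℝ) - (ν i : ℝ), δ (2 * i)⟩) ∧
    f (ℓ, (ν k : ℝ)) = some ⟨0, δ (2 * k)⟩

namespace FPStrategy

variable {G : SPTG}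

/-- `|σ| = |Int(σ)|`: the number of intervals (singletons and open intervals)
generated by the points of `σ`. -/
def size (σ : FPStrategy G) : ℕ := 2 * σ.pts.card - 1

/-- `σ` prescribes a legal move wherever Min has to play. -/
def legalMin (σ : FPStrategy G) : Prop :=
  ∀ s : G.Conf, G.validConf s → G.isMin s.1 → ¬G.deadlock s →
    ∃ m, σ.f s = some m ∧ G.canMove s m

/-- `σ` prescribes a legal move wherever Max has to play. -/
def legalMax (σ : FPStrategy G) : Prop :=
  ∀ s : G.Conf, G.validConf s → G.isMax s.1 → ¬G.deadlock s →
    ∃ m, σ.f s = some m ∧ G.canMove s m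

/-- The finite play `(s, l)` is consistent with `σ` viewed as a Min strategy. -/
def consMin (σ : FPStrategy G) (s : G.Conf) (l : List G.Move) : Prop :=
  ∀ (l₁ : List G.Move) (m : G.Move) (l₂ : List G.Move), l = l₁ ++ m :: l₂ →
    G.isMin (G.endConf s l₁).1 → σ.f (G.endConf s l₁) = some m

/-- The finite play `(s, l)` is consistent with `σ` viewed as a Max strategy. -/
def consMax (σ : FPStrategy G) (s : G.Conf) (l : List G.Move) : Prop :=
  ∀ (l₁ : List G.Move) (m : G.Move) (l₂ : List G.Move), l = l₁ ++ m :: l₂ →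
    G.isMax (G.endConf s l₁).1 → σ.f (G.endConf s l₁) = some m

/-- An NC-strategy of Min: an FP-strategy such that along every cycle consistent
with it whose endpoints have clock values in the same interval of `Int(σ)`, the sum
of the weights of the discrete transitions is at most `-1`. -/
def isNC (σ : FPStrategy G) : Prop :=
  σ.legalMin ∧
  ∀ (ℓ : G.Loc) (ν : ℝ) (l : List G.Move), l ≠ [] →
    G.ValidFrom (ℓ, ν) l → σ.consMin (ℓ, ν) l → (G.endConf (ℓ, ν) l).1 = ℓ →
    sameInt σ.pts ν (G.endConf (ℓ, ν) l).2 → G.transWtSum (ℓ, ν) l ≤ -1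

/-- The fake value of `σ` from `s`: the supremum of the prices of the plays from `s`
consistent with `σ` that reach a final location (`sup ∅ = -∞`). -/
def fakeVal (σ : FPStrategy G) (s : G.Conf) : EReal :=
  ⨆ l : { l : List G.Move //
      G.ValidFrom s l ∧ σ.consMin s l ∧ G.isFin (G.endConf s l).1 },
    ((G.finPrice s l.1 : ℝ) : EReal)

/-- `Cost(s, σ)` for `σ` viewed as a Max strategy. -/
def maxCost (σ : FPStrategy G) (s : G.Conf) : EReal :=
  ⨅ l : { l : List G.Move //
      G.ValidFrom s l ∧ σ.consMax s l ∧ G.deadlock (G.endConf s l) },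
    if G.isFin (G.endConf s l.1).1 then ((G.finPrice s l.1 : ℝ) : EReal) else ⊤

end FPStrategy

/-- `w_T`: the largest absolute value of a transition weight. -/
def wT (G : SPTG) : ℝ :=
  ⨆ p : G.Loc × G.Loc, if G.trans p.1 p.2 then |(G.transWt p.1 p.2 : ℝ)| else 0

/-- `w_L`: the largest absolute value of a (non-final) location weight. -/
def wL (G : SPTG) : ℝ :=
  ⨆ ℓ : G.Loc, if G.isFin ℓ then 0 else |(G.locWt ℓ : ℝ)|

/-- `w_F`: the largest absolute value of a final cost function on `[0,r]`. -/
def wF (G : SPTG) : ℝ :=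
  ⨆ ℓ : G.Loc, if G.isFin ℓ then max |G.finalCost ℓ 0| |G.finalCost ℓ G.r| else 0

/-- Slope of the value function of location `ℓ` between clock values `ν₁` and `ν₂`. -/
def slope (G : SPTG) (ℓ : G.Loc) (ν₁ ν₂ : ℝ) : ℝ :=
  ((G.val ℓ ν₂).toReal - (G.val ℓ ν₁).toReal) / (ν₂ - ν₁)

/-- A game is finitely optimal if Min has a fake-optimal NC-strategy, Max has an
optimal FP-strategy, and all value functions are cost functions. -/
def finitelyOptimal (G : SPTG) : Prop :=
  (∃ σ : FPStrategy G, σ.isNC ∧ ∀ s : G.Conf, G.validConf s → σ.fakeVal s = G.val s.1 s.2) ∧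
  (∃ σ : FPStrategy G, σ.legalMax ∧ ∀ s : G.Conf, G.validConf s → σ.maxCost s = G.val s.1 s.2) ∧
  ∀ ℓ : G.Loc, CostFunctionOn (G.val ℓ) 0 G.r

end SPTG

namespace SPTG

/-- `Z* = ℤ + {φ_{ℓ'}(ν) : ℓ' ∈ L_Fin}`. -/
def Zstar (G : SPTG) (ν : ℝ) : Set ℝ :=
  {x | ∃ (k : ℤ) (ℓ' : G.Loc), G.isFin ℓ' ∧ x = (k : ℝ) + G.finalCost ℓ' ν}

/-- `Poss_ν = [-(|L|-1)·w_T - w_F, (|L|-1)·w_T + w_F] ∩ Z*`. -/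
def Poss (G : SPTG) (ν : ℝ) : Set ℝ :=
  {x | x ∈ G.Zstar ν ∧
    -(((Fintype.card G.Loc : ℝ) - 1) * G.wT + G.wF) ≤ x ∧
    x ≤ ((Fintype.card G.Loc : ℝ) - 1) * G.wT + G.wF}

end SPTG



namespace ERealAux

lemma neg_add_add (c : ℝ) (x : EReal) : ((-c : ℝ) : EReal) + ((c : EReal) + x) = x := by
  induction x using EReal.rec <;> [simp; (rw [← EReal.coe_add, ← EReal.coe_add]; norm_num); simp]

lemma add_neg_add (c : ℝ) (x : EReal) : ((c : ℝ) : EReal) + (((-c : ℝ) : EReal) + x) = x := by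
  induction x using EReal.rec <;> [simp; (rw [← EReal.coe_add, ← EReal.coe_add]; norm_num); simp]

/-- Adding a real constant is an order isomorphism of `EReal`. -/
def addIso (c : ℝ) : EReal ≃o EReal where
  toFun x := (c : EReal) + x
  invFun x := ((-c : ℝ) : EReal) + x
  left_inv x := neg_add_add c x
  right_inv x := add_neg_add c x
  map_rel_iff' := by
    intro a b
    constructor
    · intro h
      have h2 := add_le_add_right h ((-c : ℝ) : EReal)
      have h3 : ((-c : ℝ) : EReal) + ((c : EReal) + a) ≤ ((-c : ℝ) : EReal) + ((c : EReal) + b) := h2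
      rwa [neg_add_add, neg_add_add] at h3
    · intro h; exact (add_le_add_right h (c : EReal) : (c : EReal) + a ≤ (c : EReal) + b)

lemma add_iInf {ι : Sort*} (c : ℝ) (f : ι → EReal) :
    (c : EReal) + ⨅ i, f i = ⨅ i, ((c : EReal) + f i) := (addIso c).map_iInf f

lemma add_left_cancel {c : ℝ} {x y : EReal} (h : (c : EReal) + x = (c : EReal) + y) :
    x = y := (addIso c).injective h

lemma add_le_add_left_iff {c : ℝ} {x y : EReal} :
    (c : EReal) + x ≤ (c : EReal) + y ↔ x ≤ y := (addIso c).le_iff_le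

lemma add_eq_top_iff {c : ℝ} {x : EReal} : (c : EReal) + x = ⊤ ↔ x = ⊤ := by
  induction x using EReal.rec <;> simp [← EReal.coe_add]

lemma add_eq_bot_iff {c : ℝ} {x : EReal} : (c : EReal) + x = ⊥ ↔ x = ⊥ := by
  rw [EReal.add_eq_bot_iff]; simp

lemma iSup_attained {ι : Type*} [Finite ι] [Nonempty ι] (f : ι → EReal) :
    ∃ i, (⨆ j, f j) = f i := by
  obtain ⟨i, hi⟩ := Finite.exists_max f
  exact ⟨i, le_antisymm (iSup_le hi) (le_iSup f i)⟩

lemma iInf_attained {ι : Type*} [Finite ι] [Nonempty ι] (f : ι → EReal) :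
    ∃ i, (⨅ j, f j) = f i := by
  obtain ⟨i, hi⟩ := Finite.exists_min f
  exact ⟨i, le_antisymm (iInf_le f i) (le_iInf hi)⟩

/-- Exchange of a countable infimum and a finite supremum of antitone sequences. -/
lemma iInf_iSup_le {ι : Type*} [Finite ι] [Nonempty ι] (f : ℕ → ι → EReal)
    (hf : ∀ i, Antitone fun n => f n i) :
    (⨅ n, ⨆ i, f n i) ≤ ⨆ i, ⨅ n, f n i := by
  have hsel : ∀ n, ∃ i, (⨆ j, f n j) = f n i := fun n => iSup_attained _
  choose sel hsel using hsel
  obtain ⟨i₀, hinf⟩ := Finite.exists_infinite_fiber sel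
  have : (⨅ n, ⨆ i, f n i) ≤ ⨅ n, f n i₀ := by
    refine le_iInf fun m => ?_
    obtain ⟨n, hn, hmn⟩ := (Set.infinite_coe_iff.mp hinf).exists_gt m
    calc (⨅ n, ⨆ i, f n i) ≤ ⨆ i, f n i := iInf_le _ n
    _ = f n (sel n) := hsel n
    _ = f n i₀ := by rw [hn]
    _ ≤ f m i₀ := hf i₀ hmn.le
  exact this.trans (le_iSup (fun i => ⨅ n, f n i) i₀)

end ERealAux

namespace SPTG

variable (G : SPTG)

lemma endConf_nil (s : G.Conf) : G.endConf s [] = s := rfl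

lemma endConf_cons (s : G.Conf) (m : G.Move) (l : List G.Move) :
    G.endConf s (m :: l) = G.endConf (G.applyMove s m) l := rfl

lemma endConf_append (s : G.Conf) (l : List G.Move) (m : G.Move) :
    G.endConf s (l ++ [m]) = G.applyMove (G.endConf s l) m := by
  simp [endConf]

lemma validFrom_append {s : G.Conf} {l : List G.Move} {m : G.Move} :
    G.ValidFrom s (l ++ [m]) ↔ G.ValidFrom s l ∧ G.canMove (G.endConf s l) m := by
  induction l generalizing s with
  | nil => simp [ValidFrom, endConf_nil]
  | cons m' l ih =>
      simp only [List.cons_append, ValidFrom, endConf_cons]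
      rw [ih]
      tauto

/-- Partial (accumulated) cost of a finite play, without the final cost. -/
def pc : G.Conf → List G.Move → ℝ
  | _, [] => 0
  | s, m :: l => G.moveCost s m + pc (G.applyMove s m) l

lemma pc_append (s : G.Conf) (l : List G.Move) (m : G.Move) :
    G.pc s (l ++ [m]) = G.pc s l + G.moveCost (G.endConf s l) m := by
  induction l generalizing s with
  | nil => simp [pc, endConf_nil]
  | cons m' l ih =>
      simp only [List.cons_append, pc, endConf_cons]
      rw [ih]
      ring

lemma finPrice_eq (s : G.Conf) (l : List G.Move) :
    G.finPrice s l = G.pc s l +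
      (if G.isFin (G.endConf s l).1 then G.finalCost (G.endConf s l).1 (G.endConf s l).2
       else 0) := by
  induction l generalizing s with
  | nil => by_cases h : G.isFin s.1 <;> simp [finPrice, pc, endConf_nil, h]
  | cons m l ih =>
    by_cases h : G.isFin (G.endConf (G.applyMove s m) l).1 <;>
      simp only [finPrice, pc, endConf_cons, ih, h, ↓reduceIte] <;> ring

lemma canMove_t_eq_zero (hurg : ∀ ℓ : G.Loc, ¬G.isFin ℓ → G.isUrg ℓ) {s : G.Conf} {m : G.Move} (h : G.canMove s m) : m.t = 0 :=
  h.2.2.2 (hurg _ (G.trans_not_fin _ _ h.2.2.1))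

lemma moveCost_eq (hurg : ∀ ℓ : G.Loc, ¬G.isFin ℓ → G.isUrg ℓ) {s : G.Conf} {m : G.Move} (h : G.canMove s m) :
    G.moveCost s m = (G.transWt s.1 m.tgt : ℝ) := by
  unfold moveCost
  rw [canMove_t_eq_zero G hurg h, zero_mul, add_zero]

lemma endConf_snd (hurg : ∀ ℓ : G.Loc, ¬G.isFin ℓ → G.isUrg ℓ) {s : G.Conf} {l : List G.Move} (h : G.ValidFrom s l) :
    (G.endConf s l).2 = s.2 := by
  induction l generalizing s with
  | nil => rfl
  | cons m l ih =>
      rw [endConf_cons]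
      rw [ih h.2]
      simp [applyMove, canMove_t_eq_zero G hurg h.1]

lemma validConf_endConf {s : G.Conf} {l : List G.Move} (hs : G.validConf s)
    (hl : G.ValidFrom s l) : G.validConf (G.endConf s l) := by
  induction l generalizing s with
  | nil => exact hs
  | cons m l ih =>
      rw [endConf_cons]
      refine ih ?_ hl.2
      obtain ⟨ht, hr, -, -⟩ := hl.1
      exact ⟨by simpa [applyMove] using add_nonneg hs.1 ht, by simpa [applyMove] using hr⟩

lemma not_deadlock_iff {s : G.Conf} (hs : s.2 ≤ G.r) :
    ¬G.deadlock s ↔ ∃ ℓ', G.trans s.1 ℓ' := by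
  unfold deadlock
  rw [not_not]
  constructor
  · rintro ⟨m, hm⟩; exact ⟨m.tgt, hm.2.2.1⟩
  · rintro ⟨ℓ', h⟩
    exact ⟨⟨0, ℓ'⟩, le_refl 0, by simpa using hs, h, fun _ => rfl⟩

lemma deadlock_of_fin {s : G.Conf} (hf : G.isFin s.1) : G.deadlock s := by
  rintro ⟨m, hm⟩
  exact G.trans_not_fin _ _ hm.2.2.1 hf

lemma isMax_of {ℓ : G.Loc} (h1 : ¬G.isMin ℓ) (h2 : ¬G.isFin ℓ) : G.isMax ℓ := by
  rcases G.partition ℓ with h | h | h <;> tauto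

end SPTG

namespace SPTG

variable (G : SPTG) (ν : ℝ)

/-- Value iteration for the underlying (untimed) finite game with clock value `ν`. -/
def VV : ℕ → G.Loc → EReal
  | 0, ℓ => if G.isFin ℓ then ((G.finalCost ℓ ν : ℝ) : EReal) else ⊤
  | n + 1, ℓ =>
    if G.isFin ℓ then ((G.finalCost ℓ ν : ℝ) : EReal)
    else if G.isMin ℓ then
      ⨅ p : {ℓ' // G.trans ℓ ℓ'}, (((G.transWt ℓ p.1 : ℝ) : EReal) + VV n p.1)
    else if _h : ∃ ℓ', G.trans ℓ ℓ' then
      ⨆ p : {ℓ' // G.trans ℓ ℓ'}, (((G.transWt ℓ p.1 : ℝ) : EReal) + VV n p.1)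
    else ⊤

lemma VV_fin {ℓ : G.Loc} (h : G.isFin ℓ) (n : ℕ) :
    G.VV ν n ℓ = ((G.finalCost ℓ ν : ℝ) : EReal) := by
  cases n <;> simp [VV, h]

lemma VV_zero_nonfin {ℓ : G.Loc} (h : ¬G.isFin ℓ) : G.VV ν 0 ℓ = ⊤ := by
  simp [VV, h]

lemma VV_succ_min {ℓ : G.Loc} (h : ¬G.isFin ℓ) (hm : G.isMin ℓ) (n : ℕ) :
    G.VV ν (n + 1) ℓ =
      ⨅ p : {ℓ' // G.trans ℓ ℓ'}, (((G.transWt ℓ p.1 : ℝ) : EReal) + G.VV ν n p.1) := by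
  simp [VV, h, hm]

lemma VV_succ_max {ℓ : G.Loc} (h : ¬G.isFin ℓ) (hm : ¬G.isMin ℓ)
    (hne : ∃ ℓ', G.trans ℓ ℓ') (n : ℕ) :
    G.VV ν (n + 1) ℓ =
      ⨆ p : {ℓ' // G.trans ℓ ℓ'}, (((G.transWt ℓ p.1 : ℝ) : EReal) + G.VV ν n p.1) := by
  simp [VV, h, hm, hne]

lemma VV_succ_nosucc {ℓ : G.Loc} (h : ¬G.isFin ℓ) (hne : ¬∃ ℓ', G.trans ℓ ℓ') (n : ℕ) :
    G.VV ν (n + 1) ℓ = ⊤ := by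
  by_cases hm : G.isMin ℓ
  · rw [VV_succ_min G ν h hm]
    exact le_antisymm le_top (le_iInf fun p => absurd ⟨p.1, p.2⟩ hne)
  · simp [VV, h, hm, hne]

lemma VV_succ_le (n : ℕ) (ℓ : G.Loc) : G.VV ν (n + 1) ℓ ≤ G.VV ν n ℓ := by
  induction n generalizing ℓ with
  | zero =>
      by_cases h : G.isFin ℓ
      · rw [VV_fin G ν h, VV_fin G ν h]
      · rw [VV_zero_nonfin G ν h]; exact le_top
  | succ n ih =>
      by_cases h : G.isFin ℓ
      · rw [VV_fin G ν h, VV_fin G ν h]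
      · by_cases hm : G.isMin ℓ
        · rw [VV_succ_min G ν h hm, VV_succ_min G ν h hm]
          exact iInf_mono fun p => add_le_add_right (ih p.1) _
        · by_cases hne : ∃ ℓ', G.trans ℓ ℓ'
          · rw [VV_succ_max G ν h hm hne, VV_succ_max G ν h hm hne]
            exact iSup_mono fun p => add_le_add_right (ih p.1) _
          · simp [VV_succ_nosucc G ν h hne]

lemma VV_anti (ℓ : G.Loc) : Antitone fun n => G.VV ν n ℓ :=
  antitone_nat_of_succ_le fun n => G.VV_succ_le ν n ℓ

lemma VV_ne_bot (n : ℕ) (ℓ : G.Loc) : G.VV ν n ℓ ≠ ⊥ := by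
  induction n generalizing ℓ with
  | zero =>
      by_cases h : G.isFin ℓ
      · rw [VV_fin G ν h]; exact EReal.coe_ne_bot _
      · rw [VV_zero_nonfin G ν h]; exact top_ne_bot
  | succ n ih =>
      by_cases h : G.isFin ℓ
      · rw [VV_fin G ν h]; exact EReal.coe_ne_bot _
      by_cases hne : ∃ ℓ', G.trans ℓ ℓ'
      · haveI : Nonempty {ℓ' // G.trans ℓ ℓ'} := ⟨⟨hne.choose, hne.choose_spec⟩⟩
        by_cases hm : G.isMin ℓ
        · rw [VV_succ_min G ν h hm]
          obtain ⟨p, hp⟩ := ERealAux.iInf_attained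
            (fun p : {ℓ' // G.trans ℓ ℓ'} => ((G.transWt ℓ p.1 : ℝ) : EReal) + G.VV ν n p.1)
          rw [hp]
          simp only [ne_eq, ERealAux.add_eq_bot_iff]
          exact ih p.1
        · rw [VV_succ_max G ν h hm hne]
          intro hbot
          have hle : ((G.transWt ℓ hne.choose : ℝ) : EReal) + G.VV ν n hne.choose ≤ ⊥ := by
            rw [← hbot]
            exact le_iSup (fun p : {ℓ' // G.trans ℓ ℓ'} =>
              ((G.transWt ℓ p.1 : ℝ) : EReal) + G.VV ν n p.1) ⟨hne.choose, hne.choose_spec⟩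
          rw [le_bot_iff, ERealAux.add_eq_bot_iff] at hle
          exact ih _ hle
      · rw [VV_succ_nosucc G ν h hne]; exact top_ne_bot

/-- `Z*` as a set of extended reals. -/
def ZstarE : Set EReal :=
  {x | ∃ (k : ℤ) (ℓf : G.Loc), G.isFin ℓf ∧ x = (((k : ℝ) + G.finalCost ℓf ν : ℝ) : EReal)}

lemma add_mem_ZstarE {x : EReal} (w : ℤ) (hx : x ∈ G.ZstarE ν ∪ {⊤}) :
    ((w : ℝ) : EReal) + x ∈ G.ZstarE ν ∪ {⊤} := by
  rcases hx with ⟨k, ℓf, hf, rfl⟩ | hx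
  · left
    refine ⟨w + k, ℓf, hf, ?_⟩
    rw [← EReal.coe_add]
    push_cast
    rw [add_assoc]
  · right
    simp only [Set.mem_singleton_iff] at hx ⊢
    rw [hx]
    exact ERealAux.add_eq_top_iff.mpr rfl

lemma VV_mem (n : ℕ) (ℓ : G.Loc) : G.VV ν n ℓ ∈ G.ZstarE ν ∪ {⊤} := by
  induction n generalizing ℓ with
  | zero =>
      by_cases h : G.isFin ℓ
      · rw [VV_fin G ν h]; exact Or.inl ⟨0, ℓ, h, by norm_num⟩
      · rw [VV_zero_nonfin G ν h]; exact Or.inr rfl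
  | succ n ih =>
      by_cases h : G.isFin ℓ
      · rw [VV_fin G ν h]; exact Or.inl ⟨0, ℓ, h, by norm_num⟩
      by_cases hne : ∃ ℓ', G.trans ℓ ℓ'
      · haveI : Nonempty {ℓ' // G.trans ℓ ℓ'} := ⟨⟨hne.choose, hne.choose_spec⟩⟩
        by_cases hm : G.isMin ℓ
        · rw [VV_succ_min G ν h hm]
          obtain ⟨p, hp⟩ := ERealAux.iInf_attained
            (fun p : {ℓ' // G.trans ℓ ℓ'} => ((G.transWt ℓ p.1 : ℝ) : EReal) + G.VV ν n p.1)
          rw [hp]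
          exact G.add_mem_ZstarE ν _ (ih p.1)
        · rw [VV_succ_max G ν h hm hne]
          obtain ⟨p, hp⟩ := ERealAux.iSup_attained
            (fun p : {ℓ' // G.trans ℓ ℓ'} => ((G.transWt ℓ p.1 : ℝ) : EReal) + G.VV ν n p.1)
          rw [hp]
          exact G.add_mem_ZstarE ν _ (ih p.1)
      · rw [VV_succ_nosucc G ν h hne]; exact Or.inr rfl

/-- The limit of the value iteration. -/
def Vinf (ℓ : G.Loc) : EReal := ⨅ n, G.VV ν n ℓ

lemma Vinf_le_VV (n : ℕ) (ℓ : G.Loc) : G.Vinf ν ℓ ≤ G.VV ν n ℓ := iInf_le _ n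

lemma Vinf_fin {ℓ : G.Loc} (h : G.isFin ℓ) :
    G.Vinf ν ℓ = ((G.finalCost ℓ ν : ℝ) : EReal) := by
  unfold Vinf
  simp [VV_fin G ν h]

lemma Vinf_le_min_succ {ℓ ℓ' : G.Loc} (hnf : ¬G.isFin ℓ) (hm : G.isMin ℓ)
    (h : G.trans ℓ ℓ') :
    G.Vinf ν ℓ ≤ ((G.transWt ℓ ℓ' : ℝ) : EReal) + G.Vinf ν ℓ' := by
  rw [Vinf, Vinf, ERealAux.add_iInf]
  refine le_iInf fun n => ?_
  refine (iInf_le _ (n + 1)).trans ?_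
  rw [VV_succ_min G ν hnf hm]
  exact iInf_le (fun p : {ℓ'' // G.trans ℓ ℓ''} =>
    ((G.transWt ℓ p.1 : ℝ) : EReal) + G.VV ν n p.1) ⟨ℓ', h⟩

lemma Vinf_le_max {ℓ : G.Loc} (hnf : ¬G.isFin ℓ) (hm : ¬G.isMin ℓ)
    (hne : ∃ ℓ', G.trans ℓ ℓ') :
    G.Vinf ν ℓ ≤ ⨆ p : {ℓ' // G.trans ℓ ℓ'},
      (((G.transWt ℓ p.1 : ℝ) : EReal) + G.Vinf ν p.1) := by
  haveI : Nonempty {ℓ' // G.trans ℓ ℓ'} := ⟨⟨hne.choose, hne.choose_spec⟩⟩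
  have h1 : G.Vinf ν ℓ ≤ ⨅ n, G.VV ν (n + 1) ℓ := le_iInf fun n => iInf_le _ (n + 1)
  have h2 : (⨅ n, G.VV ν (n + 1) ℓ) = ⨅ n, ⨆ p : {ℓ' // G.trans ℓ ℓ'},
      (((G.transWt ℓ p.1 : ℝ) : EReal) + G.VV ν n p.1) := by
    exact iInf_congr fun n => VV_succ_max G ν hnf hm hne n
  rw [h2] at h1
  refine h1.trans ?_
  refine (ERealAux.iInf_iSup_le _ fun p => ?_).trans ?_
  · intro a b hab
    exact add_le_add_right (G.VV_anti ν p.1 hab) _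
  · refine iSup_mono fun p => ?_
    rw [Vinf, ERealAux.add_iInf]

end SPTG

namespace SPTG

variable (G : SPTG) (ν : ℝ)

lemma abs_transWt_le {ℓ ℓ' : G.Loc} (h : G.trans ℓ ℓ') :
    |(G.transWt ℓ ℓ' : ℝ)| ≤ G.wT := by
  have hb : BddAbove (Set.range fun p : G.Loc × G.Loc =>
      if G.trans p.1 p.2 then |(G.transWt p.1 p.2 : ℝ)| else 0) :=
    (Set.finite_range _).bddAbove
  have := le_ciSup hb (ℓ, ℓ')
  rwa [if_pos h] at this

lemma wT_nonneg [Nonempty G.Loc] : 0 ≤ G.wT := by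
  obtain ⟨ℓ⟩ := ‹Nonempty G.Loc›
  have hb : BddAbove (Set.range fun p : G.Loc × G.Loc =>
      if G.trans p.1 p.2 then |(G.transWt p.1 p.2 : ℝ)| else 0) :=
    (Set.finite_range _).bddAbove
  refine le_trans ?_ (le_ciSup hb (ℓ, ℓ))
  split <;> [exact abs_nonneg _; exact le_refl 0]

lemma abs_finalCost_le {ℓ : G.Loc} (h : G.isFin ℓ) (hν0 : 0 ≤ ν) (hνr : ν ≤ G.r) :
    |G.finalCost ℓ ν| ≤ G.wF := by
  have key : |G.finalCost ℓ ν| ≤ max |G.finalCost ℓ 0| |G.finalCost ℓ G.r| := by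
    have h1 : G.finalCost ℓ ν ≤ max (G.finalCost ℓ 0) (G.finalCost ℓ G.r) := by
      rcases le_total 0 (G.finSlope ℓ) with hs | hs
      · refine le_trans ?_ (le_max_right _ _)
        unfold finalCost
        nlinarith
      · refine le_trans ?_ (le_max_left _ _)
        unfold finalCost
        nlinarith
    have h2 : min (G.finalCost ℓ 0) (G.finalCost ℓ G.r) ≤ G.finalCost ℓ ν := by
      rcases le_total 0 (G.finSlope ℓ) with hs | hs
      · refine le_trans (min_le_left _ _) ?_
        unfold finalCost
        nlinarith
      · refine le_trans (min_le_right _ _) ?_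
        unfold finalCost
        nlinarith
    rw [abs_le]
    constructor
    · refine le_trans ?_ h2
      refine le_min ?_ ?_
      · exact le_trans (neg_le_neg (le_max_left _ _)) (neg_abs_le _)
      · exact le_trans (neg_le_neg (le_max_right _ _)) (neg_abs_le _)
    · exact h1.trans (max_le_max (le_abs_self _) (le_abs_self _))
  refine key.trans ?_
  have hb : BddAbove (Set.range fun ℓ' : G.Loc =>
      if G.isFin ℓ' then max |G.finalCost ℓ' 0| |G.finalCost ℓ' G.r| else 0) :=
    (Set.finite_range _).bddAbove
  have := le_ciSup hb ℓ
  rwa [if_pos h] at this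

lemma wF_nonneg [Nonempty G.Loc] : 0 ≤ G.wF := by
  obtain ⟨ℓ⟩ := ‹Nonempty G.Loc›
  have hb : BddAbove (Set.range fun ℓ' : G.Loc =>
      if G.isFin ℓ' then max |G.finalCost ℓ' 0| |G.finalCost ℓ' G.r| else 0) :=
    (Set.finite_range _).bddAbove
  refine le_trans ?_ (le_ciSup hb ℓ)
  split
  · exact le_trans (abs_nonneg _) (le_max_left _ _)
  · exact le_refl 0

lemma zstar_inter_finite (a b : ℝ) : (G.Zstar ν ∩ Set.Icc a b).Finite := by
  have : (G.Zstar ν ∩ Set.Icc a b) ⊆ ⋃ ℓf : G.Loc,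
      (fun k : ℤ => (k : ℝ) + G.finalCost ℓf ν) ''
        (Set.Icc ⌈a - G.finalCost ℓf ν⌉ ⌊b - G.finalCost ℓf ν⌋) := by
    rintro x ⟨⟨k, ℓf, hf, rfl⟩, hab⟩
    refine Set.mem_iUnion.mpr ⟨ℓf, ⟨k, ⟨?_, ?_⟩, rfl⟩⟩
    · rw [Int.ceil_le]; linarith [hab.1]
    · rw [Int.le_floor]; linarith [hab.2]
  exact Set.Finite.subset
    (Set.finite_iUnion fun ℓf => (Set.finite_Icc _ _).image _) this

lemma Poss_eq : G.Poss ν = G.Zstar ν ∩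
    Set.Icc (-(((Fintype.card G.Loc : ℝ) - 1) * G.wT + G.wF))
      (((Fintype.card G.Loc : ℝ) - 1) * G.wT + G.wF) := rfl

lemma Poss_finite : (G.Poss ν).Finite := by
  rw [Poss_eq]; exact G.zstar_inter_finite ν _ _

lemma Vinf_attained {ℓ : G.Loc} (htop : G.Vinf ν ℓ ≠ ⊤) (hbot : G.Vinf ν ℓ ≠ ⊥) :
    ∃ N, G.VV ν N ℓ = G.Vinf ν ℓ := by
  set x : ℝ := (G.Vinf ν ℓ).toReal with hx
  have hxe : G.Vinf ν ℓ = (x : EReal) := (EReal.coe_toReal htop hbot).symm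
  have hlt : G.Vinf ν ℓ < ((x + 1 : ℝ) : EReal) := by
    rw [hxe, EReal.coe_lt_coe_iff]; linarith
  obtain ⟨n₀, hn₀⟩ := iInf_lt_iff.mp hlt
  -- every `VV m ℓ` for `m ≥ n₀` lies in a finite set
  have hmem : ∀ m, n₀ ≤ m → G.VV ν m ℓ ∈
      (fun y : ℝ => (y : EReal)) '' (G.Zstar ν ∩ Set.Icc x (x + 1)) := by
    intro m hm
    have h1 : G.Vinf ν ℓ ≤ G.VV ν m ℓ := iInf_le _ m
    have h2 : G.VV ν m ℓ < ((x + 1 : ℝ) : EReal) := lt_of_le_of_lt (G.VV_anti ν ℓ hm) hn₀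
    rcases G.VV_mem ν m ℓ with hz | hz
    · obtain ⟨k, ℓf, hf, he⟩ := hz
      refine ⟨(k : ℝ) + G.finalCost ℓf ν, ⟨⟨k, ℓf, hf, rfl⟩, ?_, ?_⟩, he.symm⟩
      · rw [hxe, he, EReal.coe_le_coe_iff] at h1; exact h1
      · rw [he, EReal.coe_lt_coe_iff] at h2; linarith
    · simp only [Set.mem_singleton_iff] at hz
      rw [hz] at h2
      exact absurd h2 (by simp)
  set S : Set EReal := (fun m : ℕ => G.VV ν (n₀ + m) ℓ) '' Set.univ with hS
  have hSfin : S.Finite := by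
    refine Set.Finite.subset ((G.zstar_inter_finite ν x (x + 1)).image (fun y : ℝ => (y : EReal))) ?_
    rintro y ⟨m, -, rfl⟩
    exact hmem _ (Nat.le_add_right _ _)
  have hSne : S.Nonempty := ⟨_, ⟨0, Set.mem_univ _, rfl⟩⟩
  obtain ⟨y, hy, hymin⟩ := Set.Finite.exists_minimalFor id S hSfin hSne
  obtain ⟨m₀, -, hm₀⟩ := hy
  replace hm₀ : G.VV ν (n₀ + m₀) ℓ = y := hm₀
  refine ⟨n₀ + m₀, le_antisymm ?_ (iInf_le _ _)⟩
  refine le_iInf fun n => ?_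
  have hmem2 : G.VV ν (n₀ + n) ℓ ∈ S := ⟨n, Set.mem_univ _, rfl⟩
  have : G.VV ν (n₀ + m₀) ℓ ≤ G.VV ν (n₀ + n) ℓ := by
    rcases le_total (G.VV ν (n₀ + m₀) ℓ) (G.VV ν (n₀ + n) ℓ) with h | h
    · exact h
    · rw [hm₀]
      have := hymin hmem2 (by rw [hm₀] at h; exact h)
      simp only [id] at this
      exact this
  exact this.trans (G.VV_anti ν ℓ (Nat.le_add_left n n₀))

end SPTG

namespace SPTG

lemma coe_add_assoc (a b : ℝ) (x : EReal) :
    ((a + b : ℝ) : EReal) + x = (a : EReal) + ((b : EReal) + x) := by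
  rw [EReal.coe_add, add_assoc]

variable (G : SPTG) (ν : ℝ)

/-- Best successor for Max, with respect to `Vinf`. -/
def maxTgt (ℓ : G.Loc) (hne : ∃ ℓ', G.trans ℓ ℓ') : {ℓ' // G.trans ℓ ℓ'} :=
  haveI : Nonempty {ℓ' // G.trans ℓ ℓ'} := ⟨⟨hne.choose, hne.choose_spec⟩⟩
  (Finite.exists_max fun p : {ℓ' // G.trans ℓ ℓ'} =>
    ((G.transWt ℓ p.1 : ℝ) : EReal) + G.Vinf ν p.1).choose

lemma maxTgt_spec (ℓ : G.Loc) (hne : ∃ ℓ', G.trans ℓ ℓ') (p : {ℓ' // G.trans ℓ ℓ'}) :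
    ((G.transWt ℓ p.1 : ℝ) : EReal) + G.Vinf ν p.1 ≤
      ((G.transWt ℓ (G.maxTgt ν ℓ hne).1 : ℝ) : EReal) + G.Vinf ν (G.maxTgt ν ℓ hne).1 :=
  haveI : Nonempty {ℓ' // G.trans ℓ ℓ'} := ⟨⟨hne.choose, hne.choose_spec⟩⟩
  (Finite.exists_max fun p : {ℓ' // G.trans ℓ ℓ'} =>
    ((G.transWt ℓ p.1 : ℝ) : EReal) + G.Vinf ν p.1).choose_spec p

/-- Best successor for Min, with respect to `VV m`. -/
def minTgt (m : ℕ) (ℓ : G.Loc) (hne : ∃ ℓ', G.trans ℓ ℓ') : {ℓ' // G.trans ℓ ℓ'} :=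
  haveI : Nonempty {ℓ' // G.trans ℓ ℓ'} := ⟨⟨hne.choose, hne.choose_spec⟩⟩
  (Finite.exists_min fun p : {ℓ' // G.trans ℓ ℓ'} =>
    ((G.transWt ℓ p.1 : ℝ) : EReal) + G.VV ν m p.1).choose

lemma minTgt_spec (m : ℕ) (ℓ : G.Loc) (hne : ∃ ℓ', G.trans ℓ ℓ') (p : {ℓ' // G.trans ℓ ℓ'}) :
    ((G.transWt ℓ (G.minTgt ν m ℓ hne).1 : ℝ) : EReal) + G.VV ν m (G.minTgt ν m ℓ hne).1 ≤
      ((G.transWt ℓ p.1 : ℝ) : EReal) + G.VV ν m p.1 :=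
  haveI : Nonempty {ℓ' // G.trans ℓ ℓ'} := ⟨⟨hne.choose, hne.choose_spec⟩⟩
  (Finite.exists_min fun p : {ℓ' // G.trans ℓ ℓ'} =>
    ((G.transWt ℓ p.1 : ℝ) : EReal) + G.VV ν m p.1).choose_spec p

/-- The positional Max strategy guided by `Vinf`. -/
def sigmaMax : MaxStrategy G where
  move s l :=
    if hne : ∃ ℓ', G.trans (G.endConf s l).1 ℓ' then
      some ⟨0, (G.maxTgt ν (G.endConf s l).1 hne).1⟩
    else none
  legal s l hs hl _hmax hnd := by
    have hv := G.validConf_endConf hs hl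
    have hne := (G.not_deadlock_iff hv.2).mp hnd
    refine ⟨⟨0, (G.maxTgt ν (G.endConf s l).1 hne).1⟩, dif_pos hne, ?_⟩
    exact ⟨le_refl 0, by simpa using hv.2, (G.maxTgt ν _ hne).2, fun _ => rfl⟩

/-- The Min strategy guided by the value iteration with horizon `n`. -/
def sigmaMin (n : ℕ) : MinStrategy G where
  move s l :=
    if hne : ∃ ℓ', G.trans (G.endConf s l).1 ℓ' then
      some ⟨0, (G.minTgt ν (n - l.length - 1) (G.endConf s l).1 hne).1⟩
    else none
  legal s l hs hl _hmin hnd := by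
    have hv := G.validConf_endConf hs hl
    have hne := (G.not_deadlock_iff hv.2).mp hnd
    refine ⟨⟨0, (G.minTgt ν (n - l.length - 1) (G.endConf s l).1 hne).1⟩, dif_pos hne, ?_⟩
    exact ⟨le_refl 0, by simpa using hv.2, (G.minTgt ν _ _ hne).2, fun _ => rfl⟩

lemma sigmaMax_inv (hurg : ∀ ℓ : G.Loc, ¬G.isFin ℓ → G.isUrg ℓ)
    (hν0 : 0 ≤ ν) (hνr : ν ≤ G.r) (ℓ : G.Loc) (σmin : MinStrategy G) (k : ℕ) :
    G.ValidFrom (ℓ, ν) (G.hist σmin (G.sigmaMax ν) (ℓ, ν) k) ∧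
    G.Vinf ν ℓ ≤ ((G.pc (ℓ, ν) (G.hist σmin (G.sigmaMax ν) (ℓ, ν) k) : ℝ) : EReal) +
      G.Vinf ν (G.endConf (ℓ, ν) (G.hist σmin (G.sigmaMax ν) (ℓ, ν) k)).1 := by
  induction k with
  | zero =>
      refine ⟨trivial, ?_⟩
      simp [hist, pc, endConf_nil]
  | succ k ih =>
      obtain ⟨hval, hinv⟩ := ih
      set s : G.Conf := (ℓ, ν) with hs
      set l : List G.Move := G.hist σmin (G.sigmaMax ν) s k with hl
      have hhist : G.hist σmin (G.sigmaMax ν) s (k + 1) = G.step σmin (G.sigmaMax ν) s l := rfl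
      by_cases hd : G.deadlock (G.endConf s l)
      · have hstep : G.step σmin (G.sigmaMax ν) s l = l := by
          unfold step; rw [if_pos hd]
        rw [hhist, hstep]
        exact ⟨hval, hinv⟩
      · have hv := G.validConf_endConf ⟨hν0, hνr⟩ hval
        have hne := (G.not_deadlock_iff hv.2).mp hd
        have hnf : ¬G.isFin (G.endConf s l).1 := fun hf => hd (G.deadlock_of_fin hf)
        by_cases hm : G.isMin (G.endConf s l).1
        · obtain ⟨m, hmv, hcan⟩ := σmin.legal s l ⟨hν0, hνr⟩ hval hm hd
          have hstep : G.step σmin (G.sigmaMax ν) s l = l ++ [m] := by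
            unfold step; rw [if_neg hd, if_pos hm, hmv]
          rw [hhist, hstep]
          refine ⟨G.validFrom_append.mpr ⟨hval, hcan⟩, ?_⟩
          have hw := G.moveCost_eq hurg hcan
          have htgt : (G.endConf s (l ++ [m])).1 = m.tgt := by
            rw [endConf_append]; rfl
          rw [htgt, G.pc_append, hw, coe_add_assoc]
          refine hinv.trans (add_le_add_right ?_ _)
          exact G.Vinf_le_min_succ ν hnf hm hcan.2.2.1
        · have hmv : (G.sigmaMax ν).move s l =
              some ⟨0, (G.maxTgt ν (G.endConf s l).1 hne).1⟩ := dif_pos hne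
          have hstep : G.step σmin (G.sigmaMax ν) s l =
              l ++ [⟨0, (G.maxTgt ν (G.endConf s l).1 hne).1⟩] := by
            unfold step; rw [if_neg hd, if_neg hm, hmv]
          have hcan : G.canMove (G.endConf s l) ⟨0, (G.maxTgt ν (G.endConf s l).1 hne).1⟩ :=
            ⟨le_refl 0, by simpa using hv.2, (G.maxTgt ν _ hne).2, fun _ => rfl⟩
          rw [hhist, hstep]
          refine ⟨G.validFrom_append.mpr ⟨hval, hcan⟩, ?_⟩
          have hw := G.moveCost_eq hurg hcan
          have htgt : (G.endConf s (l ++ [⟨0, (G.maxTgt ν (G.endConf s l).1 hne).1⟩])).1 =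
              (G.maxTgt ν (G.endConf s l).1 hne).1 := by
            rw [endConf_append]; rfl
          rw [htgt, G.pc_append, hw, coe_add_assoc]
          refine hinv.trans (add_le_add_right ?_ _)
          refine (G.Vinf_le_max ν hnf hm hne).trans ?_
          exact iSup_le (G.maxTgt_spec ν _ hne)
  
end SPTG

namespace SPTG

variable (G : SPTG) (ν : ℝ)

lemma playCost_ge (hurg : ∀ ℓ : G.Loc, ¬G.isFin ℓ → G.isUrg ℓ)
    (hν0 : 0 ≤ ν) (hνr : ν ≤ G.r) (ℓ : G.Loc) (σmin : MinStrategy G) :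
    G.Vinf ν ℓ ≤ G.playCost (ℓ, ν) σmin (G.sigmaMax ν) := by
  unfold playCost
  split
  case isTrue h =>
    set k := Nat.find h with hk
    have hfin : G.isFin (G.endConf (ℓ, ν) (G.hist σmin (G.sigmaMax ν) (ℓ, ν) k)).1 :=
      Nat.find_spec h
    obtain ⟨hval, hinv⟩ := G.sigmaMax_inv ν hurg hν0 hνr ℓ σmin k
    set l := G.hist σmin (G.sigmaMax ν) (ℓ, ν) k with hl
    have hsnd : (G.endConf (ℓ, ν) l).2 = ν := G.endConf_snd hurg hval
    rw [G.finPrice_eq, if_pos hfin, hsnd]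
    rw [G.Vinf_fin ν hfin] at hinv
    refine hinv.trans (le_of_eq ?_)
    rw [← EReal.coe_add]
  case isFalse h => exact le_top

lemma Vinf_le_upperVal (hurg : ∀ ℓ : G.Loc, ¬G.isFin ℓ → G.isUrg ℓ)
    (hν0 : 0 ≤ ν) (hνr : ν ≤ G.r) (ℓ : G.Loc) :
    G.Vinf ν ℓ ≤ G.upperVal (ℓ, ν) := by
  refine le_iInf fun σmin => ?_
  exact (G.playCost_ge ν hurg hν0 hνr ℓ σmin).trans
    (le_iSup (fun σmax => G.playCost (ℓ, ν) σmin σmax) (G.sigmaMax ν))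

lemma sigmaMin_inv (hurg : ∀ ℓ : G.Loc, ¬G.isFin ℓ → G.isUrg ℓ)
    (hν0 : 0 ≤ ν) (hνr : ν ≤ G.r) (n : ℕ) (ℓ : G.Loc) (htop : G.VV ν n ℓ ≠ ⊤)
    (σmax : MaxStrategy G) (k : ℕ) :
    G.ValidFrom (ℓ, ν) (G.hist (G.sigmaMin ν n) σmax (ℓ, ν) k) ∧
    ((G.pc (ℓ, ν) (G.hist (G.sigmaMin ν n) σmax (ℓ, ν) k) : ℝ) : EReal) +
      G.VV ν (n - (G.hist (G.sigmaMin ν n) σmax (ℓ, ν) k).length)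
        (G.endConf (ℓ, ν) (G.hist (G.sigmaMin ν n) σmax (ℓ, ν) k)).1 ≤ G.VV ν n ℓ ∧
    ((∀ j, j < k →
        ¬G.isFin (G.endConf (ℓ, ν) (G.hist (G.sigmaMin ν n) σmax (ℓ, ν) j)).1) →
      (G.hist (G.sigmaMin ν n) σmax (ℓ, ν) k).length = k) := by
  induction k with
  | zero =>
      refine ⟨trivial, ?_, fun _ => rfl⟩
      simp [hist, pc, endConf_nil]
  | succ k ih =>
      obtain ⟨hval, hinv, hlen⟩ := ih
      set s : G.Conf := (ℓ, ν) with hs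
      set l : List G.Move := G.hist (G.sigmaMin ν n) σmax s k with hl
      have hhist : G.hist (G.sigmaMin ν n) σmax s (k + 1) = G.step (G.sigmaMin ν n) σmax s l :=
        rfl
      have hVtop : G.VV ν (n - l.length) (G.endConf s l).1 ≠ ⊤ := by
        intro h
        rw [h] at hinv
        rw [ERealAux.add_eq_top_iff.mpr rfl] at hinv
        exact htop (top_le_iff.mp hinv)
      by_cases hfin : G.isFin (G.endConf s l).1
      · have hd : G.deadlock (G.endConf s l) := G.deadlock_of_fin hfin
        have hstep : G.step (G.sigmaMin ν n) σmax s l = l := by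
          unfold step; rw [if_pos hd]
        rw [hhist, hstep]
        exact ⟨hval, hinv, fun hall => absurd hfin (hall k (Nat.lt_succ_self k))⟩
      · have hm0 : n - l.length ≠ 0 := by
          intro h
          rw [h, G.VV_zero_nonfin ν hfin] at hVtop
          exact hVtop rfl
        obtain ⟨m, hmn⟩ := Nat.exists_eq_succ_of_ne_zero hm0
        have hne : ∃ ℓ', G.trans (G.endConf s l).1 ℓ' := by
          by_contra hne
          rw [hmn, G.VV_succ_nosucc ν hfin hne] at hVtop
          exact hVtop rfl
        have hv := G.validConf_endConf ⟨hν0, hνr⟩ hval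
        have hd : ¬G.deadlock (G.endConf s l) := (G.not_deadlock_iff hv.2).mpr hne
        have harith : n - (l.length + 1) = m := by omega
        by_cases hm : G.isMin (G.endConf s l).1
        · have hmm : n - l.length - 1 = m := by omega
          have hmv : (G.sigmaMin ν n).move s l =
              some ⟨0, (G.minTgt ν (n - l.length - 1) (G.endConf s l).1 hne).1⟩ := dif_pos hne
          have hstep : G.step (G.sigmaMin ν n) σmax s l =
              l ++ [⟨0, (G.minTgt ν (n - l.length - 1) (G.endConf s l).1 hne).1⟩] := by
            unfold step; rw [if_neg hd, if_pos hm, hmv]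
          have hcan : G.canMove (G.endConf s l)
              ⟨0, (G.minTgt ν (n - l.length - 1) (G.endConf s l).1 hne).1⟩ :=
            ⟨le_refl 0, by simpa using hv.2, (G.minTgt ν _ _ hne).2, fun _ => rfl⟩
          rw [hhist, hstep]
          refine ⟨G.validFrom_append.mpr ⟨hval, hcan⟩, ?_, ?_⟩
          · have hw := G.moveCost_eq hurg hcan
            have htgt := G.endConf_append s l
              ⟨0, (G.minTgt ν (n - l.length - 1) (G.endConf s l).1 hne).1⟩
            rw [G.pc_append, hw, List.length_append, List.length_singleton, htgt]
            show ((G.pc s l + (G.transWt (G.endConf s l).1 _ : ℝ) : ℝ) : EReal) +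
                G.VV ν (n - (l.length + 1)) _ ≤ G.VV ν n ℓ
            rw [coe_add_assoc, harith]
            refine le_trans ?_ hinv
            rw [hmn]
            refine add_le_add_right ?_ _
            rw [G.VV_succ_min ν hfin hm]
            refine le_iInf fun p => ?_
            have := G.minTgt_spec ν (n - l.length - 1) (G.endConf s l).1 hne p
            rwa [hmm] at this
          · intro hall
            have h1 : l.length = k := hlen fun j hj => hall j (hj.trans (Nat.lt_succ_self k))
            simp [h1]
        · have hmax : G.isMax (G.endConf s l).1 := G.isMax_of hm hfin
          obtain ⟨mv, hmv, hcan⟩ := σmax.legal s l ⟨hν0, hνr⟩ hval hmax hd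
          have hstep : G.step (G.sigmaMin ν n) σmax s l = l ++ [mv] := by
            unfold step; rw [if_neg hd, if_neg hm, hmv]
          rw [hhist, hstep]
          refine ⟨G.validFrom_append.mpr ⟨hval, hcan⟩, ?_, ?_⟩
          · have hw := G.moveCost_eq hurg hcan
            have htgt : (G.endConf s (l ++ [mv])).1 = mv.tgt := by
              rw [endConf_append]; rfl
            rw [G.pc_append, hw, List.length_append, List.length_singleton, htgt]
            rw [coe_add_assoc, harith]
            refine le_trans ?_ hinv
            rw [hmn]
            refine add_le_add_right ?_ _
            rw [G.VV_succ_max ν hfin hm hne]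
            exact le_iSup (fun p : {ℓ' // G.trans (G.endConf s l).1 ℓ'} =>
              ((G.transWt (G.endConf s l).1 p.1 : ℝ) : EReal) + G.VV ν m p.1)
              ⟨mv.tgt, hcan.2.2.1⟩
          · intro hall
            have h1 : l.length = k := hlen fun j hj => hall j (hj.trans (Nat.lt_succ_self k))
            simp [h1]

end SPTG

namespace SPTG

variable (G : SPTG) (ν : ℝ)

lemma reach_final (hurg : ∀ ℓ : G.Loc, ¬G.isFin ℓ → G.isUrg ℓ)
    (hν0 : 0 ≤ ν) (hνr : ν ≤ G.r) (n : ℕ) (ℓ : G.Loc) (htop : G.VV ν n ℓ ≠ ⊤)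
    (σmax : MaxStrategy G) :
    ∃ k, G.isFin (G.endConf (ℓ, ν) (G.hist (G.sigmaMin ν n) σmax (ℓ, ν) k)).1 := by
  by_contra hno
  push_neg at hno
  obtain ⟨hval, hinv, hlen⟩ := G.sigmaMin_inv ν hurg hν0 hνr n ℓ htop σmax (n + 1)
  have h1 : (G.hist (G.sigmaMin ν n) σmax (ℓ, ν) (n + 1)).length = n + 1 :=
    hlen fun j _ => hno j
  rw [h1] at hinv
  have h2 : n - (n + 1) = 0 := by omega
  rw [h2, G.VV_zero_nonfin ν (hno (n + 1))] at hinv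
  rw [ERealAux.add_eq_top_iff.mpr rfl] at hinv
  exact htop (top_le_iff.mp hinv)

lemma playCost_le (hurg : ∀ ℓ : G.Loc, ¬G.isFin ℓ → G.isUrg ℓ)
    (hν0 : 0 ≤ ν) (hνr : ν ≤ G.r) (n : ℕ) (ℓ : G.Loc) (σmax : MaxStrategy G) :
    G.playCost (ℓ, ν) (G.sigmaMin ν n) σmax ≤ G.VV ν n ℓ := by
  by_cases htop : G.VV ν n ℓ = ⊤
  · rw [htop]; exact le_top
  unfold playCost
  split
  next h =>
    set k := Nat.find h with hk
    have hfin : G.isFin (G.endConf (ℓ, ν) (G.hist (G.sigmaMin ν n) σmax (ℓ, ν) k)).1 :=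
      Nat.find_spec h
    obtain ⟨hval, hinv, -⟩ := G.sigmaMin_inv ν hurg hν0 hνr n ℓ htop σmax k
    set l := G.hist (G.sigmaMin ν n) σmax (ℓ, ν) k with hl
    have hsnd : (G.endConf (ℓ, ν) l).2 = ν := G.endConf_snd hurg hval
    rw [G.finPrice_eq, if_pos hfin, hsnd]
    rw [G.VV_fin ν hfin] at hinv
    refine le_trans (le_of_eq ?_) hinv
    rw [← EReal.coe_add]
  next h => exact absurd (G.reach_final ν hurg hν0 hνr n ℓ htop σmax) h

lemma val_eq_Vinf (hurg : ∀ ℓ : G.Loc, ¬G.isFin ℓ → G.isUrg ℓ)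
    (hν0 : 0 ≤ ν) (hνr : ν ≤ G.r) (ℓ : G.Loc) :
    G.val ℓ ν = G.Vinf ν ℓ := by
  refine le_antisymm ?_ (G.Vinf_le_upperVal ν hurg hν0 hνr ℓ)
  refine le_iInf fun n => ?_
  refine iInf_le_of_le (G.sigmaMin ν n) ?_
  exact iSup_le fun σmax => G.playCost_le ν hurg hν0 hνr n ℓ σmax

end SPTG

namespace SPTG

variable (G : SPTG) (ν : ℝ)

/-- The rank of a location: the first stage at which the value iteration reaches
its limit. -/
def rkf (ℓ : G.Loc) : ℕ := sInf {n | G.VV ν n ℓ = G.Vinf ν ℓ}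

lemma rkf_spec {ℓ : G.Loc} (h : ∃ N, G.VV ν N ℓ = G.Vinf ν ℓ) :
    G.VV ν (G.rkf ν ℓ) ℓ = G.Vinf ν ℓ := Nat.sInf_mem h

lemma rkf_le {ℓ : G.Loc} {N : ℕ} (h : G.VV ν N ℓ = G.Vinf ν ℓ) : G.rkf ν ℓ ≤ N :=
  Nat.sInf_le h

/-- Descent lemma: from any location with finite limit value there is a path to a
final location along which the rank strictly decreases, realizing the value. -/
lemma descend : ∀ (n : ℕ) (ℓ : G.Loc), G.rkf ν ℓ ≤ n →
    G.VV ν (G.rkf ν ℓ) ℓ = G.Vinf ν ℓ → G.Vinf ν ℓ ≠ ⊤ → G.Vinf ν ℓ ≠ ⊥ →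
    ∃ (k : ℕ) (p : ℕ → G.Loc), p 0 = ℓ ∧ G.isFin (p k) ∧
      (∀ i, i < k → G.trans (p i) (p (i + 1))) ∧
      (∀ i, i < k → G.rkf ν (p (i + 1)) < G.rkf ν (p i)) ∧
      G.Vinf ν ℓ = ((((∑ i ∈ Finset.range k, (G.transWt (p i) (p (i + 1)) : ℝ)) +
        G.finalCost (p k) ν) : ℝ) : EReal) := by
  intro n
  induction n with
  | zero =>
      intro ℓ hle hatt htop hbot
      by_cases hfin : G.isFin ℓ
      · refine ⟨0, fun _ => ℓ, rfl, hfin, by omega, by omega, ?_⟩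
        rw [G.Vinf_fin ν hfin]
        norm_num
      · exfalso
        have h0 : G.rkf ν ℓ = 0 := by omega
        rw [h0, G.VV_zero_nonfin ν hfin] at hatt
        exact htop hatt.symm
  | succ n ih =>
      intro ℓ hle hatt htop hbot
      by_cases hfin : G.isFin ℓ
      · refine ⟨0, fun _ => ℓ, rfl, hfin, by omega, by omega, ?_⟩
        rw [G.Vinf_fin ν hfin]
        norm_num
      · have h0 : G.rkf ν ℓ ≠ 0 := by
          intro h0
          rw [h0, G.VV_zero_nonfin ν hfin] at hatt
          exact htop hatt.symm
        obtain ⟨M, hM⟩ := Nat.exists_eq_succ_of_ne_zero h0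
        rw [Nat.succ_eq_add_one] at hM
        rw [hM] at hatt
        have hne : ∃ ℓ', G.trans ℓ ℓ' := by
          by_contra hne
          rw [G.VV_succ_nosucc ν hfin hne] at hatt
          exact htop hatt.symm
        haveI : Nonempty {ℓ' // G.trans ℓ ℓ'} := ⟨⟨hne.choose, hne.choose_spec⟩⟩
        -- find the canonical successor
        have key : ∃ p : {ℓ' // G.trans ℓ ℓ'},
            G.Vinf ν ℓ = ((G.transWt ℓ p.1 : ℝ) : EReal) + G.Vinf ν p.1 ∧
            G.VV ν M p.1 = G.Vinf ν p.1 := by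
          by_cases hm : G.isMin ℓ
          · obtain ⟨p, hp⟩ := ERealAux.iInf_attained
              (fun p : {ℓ' // G.trans ℓ ℓ'} => ((G.transWt ℓ p.1 : ℝ) : EReal) + G.VV ν M p.1)
            have hVp : G.VV ν (M + 1) ℓ = ((G.transWt ℓ p.1 : ℝ) : EReal) + G.VV ν M p.1 := by
              rw [G.VV_succ_min ν hfin hm]; exact hp
            have c1 : G.Vinf ν ℓ ≤ ((G.transWt ℓ p.1 : ℝ) : EReal) + G.Vinf ν p.1 :=
              G.Vinf_le_min_succ ν hfin hm p.2
            have c2 : ((G.transWt ℓ p.1 : ℝ) : EReal) + G.Vinf ν p.1 ≤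
                ((G.transWt ℓ p.1 : ℝ) : EReal) + G.VV ν M p.1 :=
              add_le_add_right (G.Vinf_le_VV ν M p.1) _
            have c3 : ((G.transWt ℓ p.1 : ℝ) : EReal) + G.VV ν M p.1 = G.Vinf ν ℓ := by
              rw [← hVp]; exact hatt
            have e1 : G.Vinf ν ℓ = ((G.transWt ℓ p.1 : ℝ) : EReal) + G.Vinf ν p.1 :=
              le_antisymm c1 (c2.trans (le_of_eq c3))
            refine ⟨p, e1, ?_⟩
            have : ((G.transWt ℓ p.1 : ℝ) : EReal) + G.VV ν M p.1 =
                ((G.transWt ℓ p.1 : ℝ) : EReal) + G.Vinf ν p.1 := by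
              rw [c3, e1]
            have := ERealAux.add_left_cancel this
            exact this
          · obtain ⟨p, hp⟩ := Finite.exists_max
              (fun p : {ℓ' // G.trans ℓ ℓ'} => ((G.transWt ℓ p.1 : ℝ) : EReal) + G.Vinf ν p.1)
            have c1 : G.Vinf ν ℓ ≤ ((G.transWt ℓ p.1 : ℝ) : EReal) + G.Vinf ν p.1 :=
              (G.Vinf_le_max ν hfin hm hne).trans (iSup_le hp)
            have c2 : ((G.transWt ℓ p.1 : ℝ) : EReal) + G.Vinf ν p.1 ≤
                ((G.transWt ℓ p.1 : ℝ) : EReal) + G.VV ν M p.1 :=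
              add_le_add_right (G.Vinf_le_VV ν M p.1) _
            have c3 : ((G.transWt ℓ p.1 : ℝ) : EReal) + G.VV ν M p.1 ≤ G.Vinf ν ℓ := by
              rw [← hatt, G.VV_succ_max ν hfin hm hne]
              exact le_iSup (fun q : {ℓ' // G.trans ℓ ℓ'} =>
                ((G.transWt ℓ q.1 : ℝ) : EReal) + G.VV ν M q.1) p
            have e1 : G.Vinf ν ℓ = ((G.transWt ℓ p.1 : ℝ) : EReal) + G.Vinf ν p.1 :=
              le_antisymm c1 (c2.trans c3)
            refine ⟨p, e1, ?_⟩
            have heq : ((G.transWt ℓ p.1 : ℝ) : EReal) + G.VV ν M p.1 =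
                ((G.transWt ℓ p.1 : ℝ) : EReal) + G.Vinf ν p.1 :=
              le_antisymm (c3.trans (le_of_eq e1)) c2
            exact ERealAux.add_left_cancel heq
        obtain ⟨p, he, hatt'⟩ := key
        have hptop : G.Vinf ν p.1 ≠ ⊤ := by
          intro h
          rw [h, ERealAux.add_eq_top_iff.mpr rfl] at he
          exact htop he
        have hpbot : G.Vinf ν p.1 ≠ ⊥ := by
          intro h
          rw [h, ERealAux.add_eq_bot_iff.mpr rfl] at he
          exact hbot he
        have hrkp : G.rkf ν p.1 ≤ M := G.rkf_le ν hatt'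
        have hrkp2 : G.VV ν (G.rkf ν p.1) p.1 = G.Vinf ν p.1 :=
          G.rkf_spec ν ⟨M, hatt'⟩
        have hMn : M ≤ n := by omega
        obtain ⟨k, q, hq0, hqfin, hqtr, hqrk, hqsum⟩ :=
          ih p.1 (hrkp.trans hMn) hrkp2 hptop hpbot
        refine ⟨k + 1, fun i => Nat.rec ℓ (fun j _ => q j) i, rfl, hqfin, ?_, ?_, ?_⟩
        · intro i hi
          cases i with
          | zero =>
              show G.trans ℓ (q 0)
              rw [hq0]; exact p.2
          | succ j => exact hqtr j (by omega)
        · intro i hi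
          cases i with
          | zero =>
              show G.rkf ν (q 0) < G.rkf ν ℓ
              rw [hq0]; omega
          | succ j => exact hqrk j (by omega)
        · rw [he, hqsum, ← EReal.coe_add, EReal.coe_eq_coe_iff]
          have hsum : ∑ i ∈ Finset.range (k + 1),
              (G.transWt ((fun i => (Nat.rec ℓ (fun j _ => q j) i : G.Loc)) i)
                ((fun i => (Nat.rec ℓ (fun j _ => q j) i : G.Loc)) (i + 1)) : ℝ) =
              (∑ i ∈ Finset.range k, (G.transWt (q i) (q (i + 1)) : ℝ)) +
                (G.transWt ℓ (q 0) : ℝ) := by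
            rw [Finset.sum_range_succ']
            rfl
          rw [hsum, hq0]
          show (G.transWt ℓ p.1 : ℝ) +
              ((∑ i ∈ Finset.range k, (G.transWt (q i) (q (i + 1)) : ℝ)) + G.finalCost (q k) ν) = _
          ring

end SPTG

namespace SPTG

variable (G : SPTG) (ν : ℝ)

lemma Vinf_mem_Poss (hν0 : 0 ≤ ν) (hνr : ν ≤ G.r) (ℓ : G.Loc)
    (htop : G.Vinf ν ℓ ≠ ⊤) (hbot : G.Vinf ν ℓ ≠ ⊥) :
    ∃ x ∈ G.Poss ν, G.Vinf ν ℓ = (x : EReal) := by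
  haveI : Nonempty G.Loc := ⟨ℓ⟩
  obtain ⟨N, hN⟩ := G.Vinf_attained ν htop hbot
  have hatt := G.rkf_spec ν ⟨N, hN⟩
  obtain ⟨k, p, hp0, hpfin, hptr, hprk, hsum⟩ :=
    G.descend ν (G.rkf ν ℓ) ℓ le_rfl hatt htop hbot
  have hmono : ∀ i j, i < j → j ≤ k → G.rkf ν (p j) < G.rkf ν (p i) := by
    intro i j hij hjk
    induction j with
    | zero => omega
    | succ j ihj =>
        rcases Nat.lt_or_ge i j with h | h
        · exact (hprk j (by omega)).trans (ihj h (by omega))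
        · have hij' : i = j := by omega
          subst hij'
          exact hprk i (by omega)
  have hinj : Set.InjOn p ↑(Finset.range (k + 1)) := by
    intro a ha b hb hab
    simp only [Finset.coe_range, Set.mem_Iio] at ha hb
    by_contra hne2
    rcases Nat.lt_or_ge a b with h | h
    · have := hmono a b h (by omega); rw [hab] at this; omega
    · have h' : b < a := by omega
      have := hmono b a h' (by omega); rw [hab] at this; omega
  have hcard : k + 1 ≤ Fintype.card G.Loc := by
    have := Finset.card_le_card_of_injOn p (fun a _ => Finset.mem_univ (p a)) hinj
    simpa using this
  have habs : |∑ i ∈ Finset.range k, (G.transWt (p i) (p (i + 1)) : ℝ)| ≤ (k : ℝ) * G.wT := by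
    refine (Finset.abs_sum_le_sum_abs _ _).trans ?_
    have hb : ∀ i ∈ Finset.range k, |(G.transWt (p i) (p (i + 1)) : ℝ)| ≤ G.wT := fun i hi =>
      G.abs_transWt_le (hptr i (Finset.mem_range.mp hi))
    refine (Finset.sum_le_sum hb).trans ?_
    rw [Finset.sum_const, Finset.card_range, nsmul_eq_mul]
  have hphi : |G.finalCost (p k) ν| ≤ G.wF := G.abs_finalCost_le ν hpfin hν0 hνr
  have hk : (k : ℝ) ≤ (Fintype.card G.Loc : ℝ) - 1 := by
    have : ((k : ℝ) + 1) ≤ (Fintype.card G.Loc : ℝ) := by exact_mod_cast hcard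
    linarith
  have hwT := G.wT_nonneg
  have hkwT : (k : ℝ) * G.wT ≤ ((Fintype.card G.Loc : ℝ) - 1) * G.wT :=
    mul_le_mul_of_nonneg_right hk hwT
  rw [abs_le] at habs hphi
  refine ⟨_, ⟨?_, ?_, ?_⟩, hsum⟩
  · refine ⟨∑ i ∈ Finset.range k, G.transWt (p i) (p (i + 1)), p k, hpfin, ?_⟩
    push_cast
    ring
  · linarith [habs.1, hphi.1]
  · linarith [habs.2, hphi.2]

lemma Poss_card_le (hne : Nonempty G.Loc) :
    ((G.Poss ν).ncard : ℝ) ≤ (Nat.card {ℓ' : G.Loc // G.isFin ℓ'} : ℝ) *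
      (2 * ((Fintype.card G.Loc : ℝ) - 1) * G.wT + 2 * G.wF + 1) := by
  set B : ℝ := ((Fintype.card G.Loc : ℝ) - 1) * G.wT + G.wF with hB
  have hB0 : 0 ≤ B := by
    have h1 : (1 : ℝ) ≤ (Fintype.card G.Loc : ℝ) := by
      have := Fintype.card_pos (α := G.Loc)
      exact_mod_cast this
    have := G.wT_nonneg
    have := G.wF_nonneg
    have : 0 ≤ ((Fintype.card G.Loc : ℝ) - 1) * G.wT :=
      mul_nonneg (by linarith) G.wT_nonneg
    rw [hB]
    have := G.wF_nonneg
    linarith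
  set F : Finset ℝ := Finset.univ.biUnion (fun ℓf : {ℓ' : G.Loc // G.isFin ℓ'} =>
    (Finset.Icc ⌈-B - G.finalCost ℓf.1 ν⌉ ⌊B - G.finalCost ℓf.1 ν⌋).image
      (fun z : ℤ => (z : ℝ) + G.finalCost ℓf.1 ν)) with hF
  have hsub : G.Poss ν ⊆ ↑F := by
    rintro x ⟨⟨z, ℓf, hf, rfl⟩, h1, h2⟩
    refine Finset.mem_coe.mpr (Finset.mem_biUnion.mpr ⟨⟨ℓf, hf⟩, Finset.mem_univ _, ?_⟩)
    refine Finset.mem_image.mpr ⟨z, ?_, rfl⟩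
    rw [Finset.mem_Icc]
    constructor
    · rw [Int.ceil_le]; push_cast; linarith
    · rw [Int.le_floor]; push_cast; linarith
  have h1 : (G.Poss ν).ncard ≤ F.card := by
    have := Set.ncard_le_ncard hsub F.finite_toSet
    rwa [Set.ncard_coe_finset] at this
  have hterm : ∀ ℓf : {ℓ' : G.Loc // G.isFin ℓ'},
      (((Finset.Icc ⌈-B - G.finalCost ℓf.1 ν⌉ ⌊B - G.finalCost ℓf.1 ν⌋).image
        (fun z : ℤ => (z : ℝ) + G.finalCost ℓf.1 ν)).card : ℝ) ≤ 2 * B + 1 := by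
    intro ℓf
    refine le_trans ?_ (le_of_eq (rfl : 2 * B + 1 = 2 * B + 1))
    have hcle := Finset.card_image_le (s := Finset.Icc ⌈-B - G.finalCost ℓf.1 ν⌉
      ⌊B - G.finalCost ℓf.1 ν⌋) (f := fun z : ℤ => (z : ℝ) + G.finalCost ℓf.1 ν)
    have hicc : ((Finset.Icc ⌈-B - G.finalCost ℓf.1 ν⌉ ⌊B - G.finalCost ℓf.1 ν⌋).card : ℝ) ≤
        2 * B + 1 := by
      rw [Int.card_Icc]
      have h2 : ((( ⌊B - G.finalCost ℓf.1 ν⌋ + 1 - ⌈-B - G.finalCost ℓf.1 ν⌉).toNat : ℤ) : ℝ) =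
          max ((⌊B - G.finalCost ℓf.1 ν⌋ + 1 - ⌈-B - G.finalCost ℓf.1 ν⌉ : ℤ) : ℝ) 0 := by
        rw [Int.toNat_eq_max]
        push_cast
        rfl
      have h3 : ((⌊B - G.finalCost ℓf.1 ν⌋ + 1 - ⌈-B - G.finalCost ℓf.1 ν⌉ : ℤ) : ℝ) ≤
          2 * B + 1 := by
        push_cast
        have := Int.floor_le (B - G.finalCost ℓf.1 ν)
        have := Int.le_ceil (-B - G.finalCost ℓf.1 ν)
        linarith
      calc (((⌊B - G.finalCost ℓf.1 ν⌋ + 1 - ⌈-B - G.finalCost ℓf.1 ν⌉).toNat : ℕ) : ℝ)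
          = ((((⌊B - G.finalCost ℓf.1 ν⌋ + 1 - ⌈-B - G.finalCost ℓf.1 ν⌉).toNat : ℤ)) : ℝ) := by
            push_cast; rfl
        _ = max ((⌊B - G.finalCost ℓf.1 ν⌋ + 1 - ⌈-B - G.finalCost ℓf.1 ν⌉ : ℤ) : ℝ) 0 := h2
        _ ≤ 2 * B + 1 := max_le h3 (by linarith)
    refine le_trans ?_ hicc
    exact_mod_cast hcle
  have h2 : (F.card : ℝ) ≤ (Fintype.card {ℓ' : G.Loc // G.isFin ℓ'} : ℝ) * (2 * B + 1) := by
    have hc : F.card ≤ ∑ ℓf : {ℓ' : G.Loc // G.isFin ℓ'},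
        ((Finset.Icc ⌈-B - G.finalCost ℓf.1 ν⌉ ⌊B - G.finalCost ℓf.1 ν⌋).image
          (fun z : ℤ => (z : ℝ) + G.finalCost ℓf.1 ν)).card := Finset.card_biUnion_le
    have hc' : (F.card : ℝ) ≤ ∑ ℓf : {ℓ' : G.Loc // G.isFin ℓ'},
        (((Finset.Icc ⌈-B - G.finalCost ℓf.1 ν⌉ ⌊B - G.finalCost ℓf.1 ν⌋).image
          (fun z : ℤ => (z : ℝ) + G.finalCost ℓf.1 ν)).card : ℝ) := by
      exact_mod_cast hc
    refine hc'.trans ?_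
    refine (Finset.sum_le_sum fun ℓf _ => hterm ℓf).trans ?_
    rw [Finset.sum_const, Finset.card_univ, nsmul_eq_mul]
  have hfinal : (2 : ℝ) * B + 1 =
      2 * ((Fintype.card G.Loc : ℝ) - 1) * G.wT + 2 * G.wF + 1 := by rw [hB]; ring
  rw [Nat.card_eq_fintype_card, ← hfinal]
  calc ((G.Poss ν).ncard : ℝ) ≤ (F.card : ℝ) := by exact_mod_cast h1
    _ ≤ _ := h2

end SPTG

open SPTG in
/-- **Corollary: possible values.** In an `r`-SPTG with only urgent
(non-final) locations, `Val_G(ℓ,ν) ∈ Poss_ν ∪ {-∞, +∞}`, and `Poss_ν` is finite of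
cardinality at most `|L_Fin|·(2(|L|-1)·w_T + 2·w_F + 1)`. -/
theorem urgent_possible_values (G : SPTG) (hq : ∃ q : ℚ, G.r = (q : ℝ))
    (hrat : G.ratFinal) (hurg : ∀ ℓ : G.Loc, ¬G.isFin ℓ → G.isUrg ℓ)
    (ℓ : G.Loc) (ν : ℝ) (hν0 : 0 ≤ ν) (hνr : ν ≤ G.r) :
    (G.val ℓ ν = ⊤ ∨ G.val ℓ ν = ⊥ ∨ ∃ x ∈ G.Poss ν, G.val ℓ ν = (x : EReal)) ∧
    (G.Poss ν).Finite ∧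
    ((G.Poss ν).ncard : ℝ) ≤ (Nat.card { ℓ' : G.Loc // G.isFin ℓ' } : ℝ) *
      (2 * ((Fintype.card G.Loc : ℝ) - 1) * G.wT + 2 * G.wF + 1) := by
  haveI : Nonempty G.Loc := ⟨ℓ⟩
  refine ⟨?_, G.Poss_finite ν, G.Poss_card_le ν ⟨ℓ⟩⟩
  rw [G.val_eq_Vinf ν hurg hν0 hνr ℓ]
  by_cases htop : G.Vinf ν ℓ = ⊤
  · exact Or.inl htop
  by_cases hbot : G.Vinf ν ℓ = ⊥
  · exact Or.inr (Or.inl hbot)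
  · exact Or.inr (Or.inr (G.Vinf_mem_Poss ν hν0 hνr ℓ htop hbot))
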